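/- Let f : ℝ → ℝ be convex, A, B Hermitian n×n matrices, and x ∈ ℂⁿ a unit vector. If p : [0,1] → ℝ is nonnegative, integrable, and symmetric about 1/2, then (∫₀¹ p(t) dt)·f((⟨Ax,x⟩ + ⟨Bx,x⟩)/2) ≤ ∫₀¹ p(t)·f((1−t)⟨Ax,x⟩ + t⟨Bx,x⟩) dt. -/

import Mathlib

open MeasureTheory Set intervalIntegral Matrix

theorem fejer_real_aux (a b : ℝ) (f : ℝ → ℝ) (hf : ConvexOn ℝ Set.univ f)
    (p : ℝ → ℝ)
    (hp0 : ∀ t ∈ Icc (0:ℝ) 1, 0 ≤ p t)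
    (hpint : IntervalIntegrable p volume 0 1)
    (hpsym : ∀ t ∈ Icc (0:ℝ) 1, p (1 - t) = p t)
    (hint : IntervalIntegrable (fun t => p t * f ((1 - t) * a + t * b)) volume 0 1) :
    (∫ t in (0:ℝ)..1, p t) * f ((a + b) / 2) ≤
      ∫ t in (0:ℝ)..1, p t * f ((1 - t) * a + t * b) := by
  set G : ℝ → ℝ := fun t => f ((1 - t) * a + t * b) with hG
  -- integrability of t ↦ p t * G (1 - t)
  have h1 : IntervalIntegrable (fun t => p t * G (1 - t)) volume 0 1 := by
    have hcomp := hint.comp_sub_left 1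
    norm_num at hcomp
    apply hcomp.symm.congr
    intro t ht
    have ht' : t ∈ Icc (0:ℝ) 1 := by
      rw [uIoc_of_le (by norm_num : (0:ℝ) ≤ 1)] at ht
      exact Ioc_subset_Icc_self ht
    simp only [hG, hpsym t ht']
    ring_nf
  have heq : ∫ t in (0:ℝ)..1, p t * G (1 - t) = ∫ t in (0:ℝ)..1, p t * G t := by
    have h2 : ∫ t in (0:ℝ)..1, p t * G (1 - t)
        = ∫ t in (0:ℝ)..1, p (1 - t) * G (1 - t) := by
      apply intervalIntegral.integral_congr
      intro t ht
      rw [uIcc_of_le (by norm_num : (0:ℝ) ≤ 1)] at ht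
      simp [hpsym t ht]
    rw [h2]
    have := intervalIntegral.integral_comp_sub_left (a := 0) (b := 1) (fun t => p t * G t) 1
    simpa using this
  have hmid : ∫ t in (0:ℝ)..1, p t * f ((a + b) / 2)
      = (∫ t in (0:ℝ)..1, p t) * f ((a + b) / 2) := by
    rw [intervalIntegral.integral_mul_const]
  rw [← hmid]
  have hle : ∫ t in (0:ℝ)..1, p t * f ((a + b) / 2)
      ≤ ∫ t in (0:ℝ)..1, p t * ((G t + G (1 - t)) / 2) := by
    apply intervalIntegral.integral_mono_on (by norm_num)
    · exact hpint.mul_const _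
    · have : IntervalIntegrable (fun t => (p t * G t + p t * G (1 - t)) * (1/2)) volume 0 1 :=
        (hint.add h1).mul_const _
      apply this.congr
      intro t _; dsimp only
      ring
    · intro t ht
      have hconv := hf.2 (mem_univ ((1 - t) * a + t * b)) (mem_univ (t * a + (1 - t) * b))
        (by norm_num : (0:ℝ) ≤ 1/2) (by norm_num : (0:ℝ) ≤ 1/2) (by norm_num)
      have hG1 : G (1 - t) = f (t * a + (1 - t) * b) := by
        simp only [hG]
        ring_nf
      have hmidval : (a + b) / 2
          = (1/2 : ℝ) • ((1 - t) * a + t * b) + (1/2 : ℝ) • (t * a + (1 - t) * b) := by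
        simp only [smul_eq_mul]; ring
      have : f ((a + b) / 2) ≤ (G t + G (1 - t)) / 2 := by
        rw [hmidval, hG1]
        calc f _ ≤ (1/2 : ℝ) * f ((1 - t) * a + t * b)
            + (1/2 : ℝ) * f (t * a + (1 - t) * b) := by simpa using hconv
          _ = (f ((1 - t) * a + t * b) + f (t * a + (1 - t) * b)) / 2 := by ring
      exact mul_le_mul_of_nonneg_left this (hp0 t ht)
  calc ∫ t in (0:ℝ)..1, p t * f ((a + b) / 2)
      ≤ ∫ t in (0:ℝ)..1, p t * ((G t + G (1 - t)) / 2) := hle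
    _ = ((∫ t in (0:ℝ)..1, p t * G t) + ∫ t in (0:ℝ)..1, p t * G (1 - t)) * (1/2) := by
        rw [← intervalIntegral.integral_add hint h1, ← intervalIntegral.integral_mul_const]
        congr 1
        ext t
        ring
    _ = ∫ t in (0:ℝ)..1, p t * G t := by rw [heq]; ring

theorem matrix_fejer_scalar {n : ℕ} (A B : Matrix (Fin n) (Fin n) ℂ)
    (hA : A.IsHermitian) (hB : B.IsHermitian)
    (f : ℝ → ℝ) (hf : ConvexOn ℝ Set.univ f)
    (p : ℝ → ℝ)
    (hp0 : ∀ t ∈ Icc (0:ℝ) 1, 0 ≤ p t)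
    (hpint : IntervalIntegrable p volume 0 1)
    (hpsym : ∀ t ∈ Icc (0:ℝ) 1, p (1 - t) = p t)
    (x : EuclideanSpace ℂ (Fin n)) (hx : ‖x‖ = 1)
    (hint : IntervalIntegrable (fun t => p t *
      f ((1 - t) * (star (x : Fin n → ℂ) ⬝ᵥ A.mulVec (x : Fin n → ℂ)).re
        + t * (star (x : Fin n → ℂ) ⬝ᵥ B.mulVec (x : Fin n → ℂ)).re)) volume 0 1) :
    (∫ t in (0:ℝ)..1, p t) *
        f (((star (x : Fin n → ℂ) ⬝ᵥ A.mulVec (x : Fin n → ℂ)).re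
          + (star (x : Fin n → ℂ) ⬝ᵥ B.mulVec (x : Fin n → ℂ)).re) / 2) ≤
      ∫ t in (0:ℝ)..1, p t *
        f ((1 - t) * (star (x : Fin n → ℂ) ⬝ᵥ A.mulVec (x : Fin n → ℂ)).re
          + t * (star (x : Fin n → ℂ) ⬝ᵥ B.mulVec (x : Fin n → ℂ)).re) := by
  exact fejer_real_aux _ _ f hf p hp0 hpint hpsym hint
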